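/- Let H ∈ ℝ^p, let G be an n×p real matrix with columns g_1, …, g_p, let x̄ ∈ ℝ^n and a > 0. Then the function u(y) = max_{1≤i≤p} {(H)_i + ⟨g_i, y⟩} + (1/(2a))‖y − x̄‖² attains its minimum over ℝ^n, strong duality holds: min_{y ∈ ℝ^n} u(y) = max_{λ ∈ Δ_p} [⟨λ, H⟩ + ⟨G λ, x̄⟩ − (a/2)‖G λ‖²], and if λ* attains the maximum on the right-hand side then y* = x̄ − a G λ* attains the minimum on the left-hand side. -/

import Mathlib

open Set
open scoped RealInnerProductSpace

/-- `Euc n` is the Euclidean space `ℝ^n`. -/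
abbrev Euc (n : ℕ) := EuclideanSpace ℝ (Fin n)

/-- strong duality for the inner problem: the regularized piecewise-linear
model `u(y) = max_i {(H)_i + ⟨g_i, y⟩} + (1/(2a))‖y − x̄‖²` attains its minimum over `ℝ^n`,
the anti-dual QP `d(λ) = ⟨λ, H⟩ + ⟨Gλ, x̄⟩ − (a/2)‖Gλ‖²` attains its maximum over the simplex,
and for any maximizer `λ*` of `d` on `Δ_p`, the point `y* = x̄ − a G λ*` attains the minimum of
`u` and `u(y*) = d(λ*)` (i.e. `min u = max d`). -/

lemma inner_problem_cs_aux {n p : ℕ} [Nonempty (Fin p)]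
    (H : Fin p → ℝ) (g : Fin p → Euc n) (xbar : Euc n) (a : ℝ) (ha : 0 < a)
    (lam : Fin p → ℝ) (hmem : lam ∈ stdSimplex ℝ (Fin p))
    (hmax : IsMaxOn
      (fun l : Fin p → ℝ =>
        (∑ i, l i * H i) + ⟪∑ i, l i • g i, xbar⟫ - a / 2 * ‖∑ i, l i • g i‖ ^ 2)
      (stdSimplex ℝ (Fin p)) lam) (k : Fin p) :
    H k + ⟪g k, xbar - a • ∑ j, lam j • g j⟫
      ≤ ∑ i, lam i * (H i + ⟪g i, xbar - a • ∑ j, lam j • g j⟫) := by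
  classical
  set s : Euc n := ∑ j, lam j • g j with hs
  set w : Euc n := g k - s with hw
  set c : ℝ := (H k + ⟪g k, xbar - a • s⟫) - ∑ i, lam i * (H i + ⟪g i, xbar - a • s⟫) with hc
  have hsum1 : ∑ i, lam i = 1 := hmem.2
  -- key per-t inequality
  have key : ∀ t : ℝ, 0 < t → t ≤ 1 → c * t ≤ a / 2 * ‖w‖ ^ 2 * t ^ 2 := by
    intro t ht0 ht1
    set lt : Fin p → ℝ := fun i => (1 - t) * lam i + t * (if i = k then 1 else 0) with hlt
    have hltmem : lt ∈ stdSimplex ℝ (Fin p) := by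
      constructor
      · intro i
        have h0 := hmem.1 i
        by_cases hik : i = k
        · subst hik
          simp only [hlt, eq_self_iff_true, if_true, mul_one]; nlinarith
        · simp only [hlt, if_neg hik, mul_zero, add_zero]; nlinarith
      · rw [Finset.sum_add_distrib, ← Finset.mul_sum, hsum1, ← Finset.mul_sum]
        rw [Finset.sum_ite_eq' Finset.univ k (fun _ => (1:ℝ))]
        simp
    have hle := hmax hltmem
    simp only [Set.mem_setOf_eq] at hle
    -- compute the pieces
    have h1 : ∑ i, lt i * H i = (1 - t) * (∑ i, lam i * H i) + t * H k := by
      simp only [hlt, add_mul, mul_assoc]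
      rw [Finset.sum_add_distrib, ← Finset.mul_sum, ← Finset.mul_sum]
      congr 2
      simp [ite_mul, Finset.sum_ite_eq']
    have h2 : ∑ i, lt i • g i = s + t • w := by
      simp only [hlt, add_smul, mul_smul]
      rw [Finset.sum_add_distrib, ← Finset.smul_sum, ← Finset.smul_sum, ← hs]
      have he : ∑ i, (if i = k then (1:ℝ) else 0) • g i = g k := by
        simp [ite_smul, Finset.sum_ite_eq']
      rw [he, hw]
      module
    rw [h1, h2] at hle
    have h3 : ⟪s + t • w, xbar⟫ = ⟪s, xbar⟫ + t * ⟪w, xbar⟫ := by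
      rw [inner_add_left, real_inner_smul_left]
    have h4 : ‖s + t • w‖ ^ 2 = ‖s‖ ^ 2 + 2 * (t * ⟪s, w⟫) + t ^ 2 * ‖w‖ ^ 2 := by
      rw [norm_add_sq_real, real_inner_smul_right, norm_smul]
      rw [mul_pow, Real.norm_eq_abs, sq_abs]
    rw [h3, h4] at hle
    -- identify c
    have hc2 : c = H k - (∑ i, lam i * H i) + ⟪w, xbar⟫ - a * ⟪s, w⟫ := by
      have e1 : ∑ i, lam i * (H i + ⟪g i, xbar - a • s⟫)
          = (∑ i, lam i * H i) + ⟪s, xbar - a • s⟫ := by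
        rw [hs, sum_inner, ← Finset.sum_add_distrib]
        congr 1; ext i
        rw [real_inner_smul_left]; ring
      rw [hc, e1, hw]
      simp only [inner_sub_left, inner_sub_right, real_inner_smul_right,
        real_inner_comm s (g k)]
      ring
    nlinarith [hle, hc2]
  -- conclude c ≤ 0
  have hcle : c ≤ 0 := by
    by_contra hpos
    push_neg at hpos
    set K : ℝ := a / 2 * ‖w‖ ^ 2 with hK
    have hK0 : 0 ≤ K := by positivity
    have hd : (0:ℝ) < 2 * (K + 1) := by positivity
    set t : ℝ := min 1 (c / (2 * (K + 1))) with htdef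
    have ht0 : 0 < t := lt_min one_pos (by positivity)
    have ht1 : t ≤ 1 := min_le_left _ _
    have htle : t ≤ c / (2 * (K + 1)) := min_le_right _ _
    have h := key t ht0 ht1
    have h2 : c ≤ K * t := by nlinarith
    have h3 : K * t ≤ K * (c / (2 * (K + 1))) := mul_le_mul_of_nonneg_left htle hK0
    have h4 : K * (c / (2 * (K + 1))) < c := by
      rw [mul_comm, div_mul_eq_mul_div, div_lt_iff₀ hd]
      nlinarith
    linarith
  linarith [hcle]

theorem inner_problem_strong_duality {n p : ℕ} [Nonempty (Fin p)]
    (H : Fin p → ℝ) (g : Fin p → Euc n) (xbar : Euc n) (a : ℝ) (ha : 0 < a) :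
    (∃ ystar : Euc n,
        IsMinOn (fun y : Euc n => (⨆ i, (H i + ⟪g i, y⟫)) + 1 / (2 * a) * ‖y - xbar‖ ^ 2)
          Set.univ ystar)
    ∧ (∃ lam ∈ stdSimplex ℝ (Fin p),
        IsMaxOn
          (fun l : Fin p → ℝ =>
            (∑ i, l i * H i) + ⟪∑ i, l i • g i, xbar⟫ - a / 2 * ‖∑ i, l i • g i‖ ^ 2)
          (stdSimplex ℝ (Fin p)) lam)
    ∧ ∀ lam ∈ stdSimplex ℝ (Fin p),
        IsMaxOn
          (fun l : Fin p → ℝ =>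
            (∑ i, l i * H i) + ⟪∑ i, l i • g i, xbar⟫ - a / 2 * ‖∑ i, l i • g i‖ ^ 2)
          (stdSimplex ℝ (Fin p)) lam →
        ((⨆ i, (H i + ⟪g i, xbar - a • ∑ j, lam j • g j⟫))
            + 1 / (2 * a) * ‖(xbar - a • ∑ j, lam j • g j) - xbar‖ ^ 2
          = (∑ i, lam i * H i) + ⟪∑ i, lam i • g i, xbar⟫ - a / 2 * ‖∑ i, lam i • g i‖ ^ 2)
        ∧ IsMinOn (fun y : Euc n => (⨆ i, (H i + ⟪g i, y⟫)) + 1 / (2 * a) * ‖y - xbar‖ ^ 2)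
            Set.univ (xbar - a • ∑ j, lam j • g j) := by
  classical
  have hcont : ContinuousOn
      (fun l : Fin p → ℝ =>
        (∑ i, l i * H i) + ⟪∑ i, l i • g i, xbar⟫ - a / 2 * ‖∑ i, l i • g i‖ ^ 2)
      (stdSimplex ℝ (Fin p)) := by
    have hG : Continuous (fun l : Fin p → ℝ => ∑ i, l i • g i) :=
      continuous_finset_sum _ fun i _ => (continuous_apply i).smul continuous_const
    exact (((continuous_finset_sum _ fun i _ => (continuous_apply i).mul continuous_const).add
      (hG.inner continuous_const)).sub (continuous_const.mul ((hG.norm).pow 2))).continuousOn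
  have hne : (stdSimplex ℝ (Fin p)).Nonempty :=
    ⟨_, ite_eq_mem_stdSimplex ℝ (Classical.arbitrary (Fin p))⟩
  obtain ⟨lam0, hlam0, hmax0⟩ := (isCompact_stdSimplex ℝ (Fin p)).exists_isMaxOn hne hcont
  have main : ∀ lam ∈ stdSimplex ℝ (Fin p),
      IsMaxOn
        (fun l : Fin p → ℝ =>
          (∑ i, l i * H i) + ⟪∑ i, l i • g i, xbar⟫ - a / 2 * ‖∑ i, l i • g i‖ ^ 2)
        (stdSimplex ℝ (Fin p)) lam →
      ((⨆ i, (H i + ⟪g i, xbar - a • ∑ j, lam j • g j⟫))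
          + 1 / (2 * a) * ‖(xbar - a • ∑ j, lam j • g j) - xbar‖ ^ 2
        = (∑ i, lam i * H i) + ⟪∑ i, lam i • g i, xbar⟫ - a / 2 * ‖∑ i, lam i • g i‖ ^ 2)
      ∧ IsMinOn (fun y : Euc n => (⨆ i, (H i + ⟪g i, y⟫)) + 1 / (2 * a) * ‖y - xbar‖ ^ 2)
          Set.univ (xbar - a • ∑ j, lam j • g j) := by
    intro lam hmem hmax
    set s : Euc n := ∑ j, lam j • g j with hs
    have hbdd : ∀ z : Euc n, BddAbove (Set.range (fun i => H i + ⟪g i, z⟫)) :=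
      fun z => (Set.finite_range _).bddAbove
    have hsumle : ∀ z : Euc n,
        ∑ i, lam i * (H i + ⟪g i, z⟫) ≤ ⨆ i, (H i + ⟪g i, z⟫) := by
      intro z
      calc ∑ i, lam i * (H i + ⟪g i, z⟫)
          ≤ ∑ i, lam i * (⨆ j, (H j + ⟪g j, z⟫)) :=
            Finset.sum_le_sum fun i _ =>
              mul_le_mul_of_nonneg_left (le_ciSup (hbdd z) i) (hmem.1 i)
        _ = ⨆ j, (H j + ⟪g j, z⟫) := by rw [← Finset.sum_mul, hmem.2, one_mul]
    have hwsum : ∀ z : Euc n,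
        ∑ i, lam i * (H i + ⟪g i, z⟫) = (∑ i, lam i * H i) + ⟪s, z⟫ := by
      intro z
      rw [hs, sum_inner, ← Finset.sum_add_distrib]
      congr 1; ext i; rw [real_inner_smul_left]; ring
    have hsup : (⨆ i, (H i + ⟪g i, xbar - a • s⟫))
        = ∑ i, lam i * (H i + ⟪g i, xbar - a • s⟫) :=
      le_antisymm (ciSup_le fun k => inner_problem_cs_aux H g xbar a ha lam hmem hmax k) (hsumle _)
    have hnorm : ‖(xbar - a • s) - xbar‖ ^ 2 = a ^ 2 * ‖s‖ ^ 2 := by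
      have he : (xbar - a • s) - xbar = -(a • s) := by abel
      rw [he, norm_neg, norm_smul, mul_pow, Real.norm_eq_abs, sq_abs]
    have hinner : ⟪s, xbar - a • s⟫ = ⟪s, xbar⟫ - a * ‖s‖ ^ 2 := by
      rw [inner_sub_right, real_inner_smul_right, real_inner_self_eq_norm_sq]
    have heq : (⨆ i, (H i + ⟪g i, xbar - a • s⟫))
        + 1 / (2 * a) * ‖(xbar - a • s) - xbar‖ ^ 2
        = (∑ i, lam i * H i) + ⟪s, xbar⟫ - a / 2 * ‖s‖ ^ 2 := by
      rw [hsup, hwsum _, hnorm, hinner]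
      field_simp
      ring
    refine ⟨heq, ?_⟩
    intro z _
    simp only [Set.mem_setOf_eq]
    rw [heq]
    -- weak duality : d lam ≤ u z
    have hCS : ⟪s, xbar - z⟫ ≤ ‖s‖ * ‖xbar - z‖ := real_inner_le_norm _ _
    have hsub : ⟪s, xbar - z⟫ = ⟪s, xbar⟫ - ⟪s, z⟫ := inner_sub_right _ _ _
    have hnr : ‖xbar - z‖ = ‖z - xbar‖ := norm_sub_rev _ _
    rw [hnr] at hCS
    have hyoung : ‖s‖ * ‖z - xbar‖ ≤ a / 2 * ‖s‖ ^ 2 + 1 / (2 * a) * ‖z - xbar‖ ^ 2 := by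
      rw [← sub_nonneg]
      have he : a / 2 * ‖s‖ ^ 2 + 1 / (2 * a) * ‖z - xbar‖ ^ 2 - ‖s‖ * ‖z - xbar‖
          = (a * ‖s‖ - ‖z - xbar‖) ^ 2 / (2 * a) := by
        field_simp
        ring
      rw [he]
      positivity
    have hlo : ∑ i, lam i * (H i + ⟪g i, z⟫) ≤ ⨆ i, (H i + ⟪g i, z⟫) := hsumle z
    rw [hwsum z] at hlo
    linarith
  exact ⟨⟨_, (main lam0 hlam0 hmax0).2⟩, ⟨lam0, hlam0, hmax0⟩, main⟩
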